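/- Let z ∈ T_L with z ≠ o, let i ∈ {1,…,d}, and let q be a natural number such that z_i + q is even and both z_i − q and z_i + q lie in the open interval (0, L). Then ⟨φ_o^1 φ_z^1⟩_{L,N,β} ≤ (1/2) ⟨φ_o^1 φ_{(z_i − q) e_i}^1⟩_{L,N,β} + (1/2) ⟨φ_o^1 φ_{(z_i + q) e_i}^1⟩_{L,N,β}. -/

import Mathlib

open MeasureTheory Metric
open scoped RealInnerProductSpace BigOperators

/-- Vertices of the torus `(ℤ/Lℤ)^d`. -/
abbrev TorusPt (d L : ℕ) := Fin d → ZMod L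

/-- Nearest-neighbour adjacency on the torus: `x` and `y` differ by `±1 (mod L)`
in exactly one coordinate. -/
def torusAdj {d L : ℕ} (x y : TorusPt d L) : Prop :=
  ∃ j : Fin d, y = Function.update x j (x j + 1) ∨ y = Function.update x j (x j - 1)

instance {d L : ℕ} (x y : TorusPt d L) : Decidable (torusAdj x y) := by
  unfold torusAdj; infer_instance

/-- The unit sphere `S^{N-1} ⊂ ℝ^N`. -/
abbrev SpinSphere (N : ℕ) := sphere (0 : EuclideanSpace ℝ (Fin N)) 1

/-- A spin configuration on the torus. -/
abbrev SpinCfg (d L N : ℕ) := TorusPt d L → SpinSphere N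

/-- The uniform probability measure on the unit sphere `S^{N-1}`. -/
noncomputable def sphereUniform (N : ℕ) : Measure (SpinSphere N) :=
  ((volume : Measure (EuclideanSpace ℝ (Fin N))).toSphere Set.univ)⁻¹ •
    (volume : Measure (EuclideanSpace ℝ (Fin N))).toSphere

/-- The product over vertices of the uniform probability measures on the sphere. -/
noncomputable def spinMeasure (d L N : ℕ) [NeZero L] : Measure (SpinCfg d L N) :=
  Measure.pi fun _ : TorusPt d L => sphereUniform N

/-- The Hamiltonian `H(φ) = -∑_{{x,y} edge} φ_x · φ_y`; every unordered
nearest-neighbour edge appears exactly twice in the double sum below. -/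
noncomputable def hamiltonian {d L N : ℕ} [NeZero L] (φ : SpinCfg d L N) : ℝ :=
  -(1 / 2) * ∑ x : TorusPt d L, ∑ y : TorusPt d L,
    if torusAdj x y then
      ⟪(φ x : EuclideanSpace ℝ (Fin N)), (φ y : EuclideanSpace ℝ (Fin N))⟫
    else 0

/-- The Gibbs expectation `⟨f⟩_{L,N,β}`. -/
noncomputable def gibbsExp (d L N : ℕ) [NeZero L] (β : ℝ) (f : SpinCfg d L N → ℝ) : ℝ :=
  (∫ φ, Real.exp (-β * hamiltonian φ) ∂(spinMeasure d L N))⁻¹ *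
    ∫ φ, f φ * Real.exp (-β * hamiltonian φ) ∂(spinMeasure d L N)

/-- The spin-spin correlation `⟨φ_x ⬝ φ_y⟩_{L,N,β}`. -/
noncomputable def corrDot (d L N : ℕ) [NeZero L] (β : ℝ) (x y : TorusPt d L) : ℝ :=
  gibbsExp d L N β fun φ =>
    ⟪(φ x : EuclideanSpace ℝ (Fin N)), (φ y : EuclideanSpace ℝ (Fin N))⟫

/-- The correlation `⟨φ_x^1 φ_y^1⟩_{L,N,β}` of first components. -/
noncomputable def corrOne (d L N : ℕ) [NeZero L] [NeZero N] (β : ℝ) (x y : TorusPt d L) : ℝ :=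
  gibbsExp d L N β fun φ =>
    (φ x : EuclideanSpace ℝ (Fin N)) 0 * (φ y : EuclideanSpace ℝ (Fin N)) 0

/-- The origin of the torus. -/
def torusOrigin (d L : ℕ) : TorusPt d L := fun _ => 0

/-- The point `n • e_i` on the `i`-th cartesian axis. -/
def axisPt (d L : ℕ) (i : Fin d) (n : ℕ) : TorusPt d L :=
  fun k => if k = i then (n : ZMod L) else 0

/-- The sup torus norm `‖z‖_∞ = max_i min(z_i, L - z_i)`. -/
def tnormInf {d L : ℕ} (z : TorusPt d L) : ℕ :=
  Finset.univ.sup fun i : Fin d => min (z i).val (L - (z i).val)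


set_option linter.unusedSectionVars false
set_option maxHeartbeats 1000000


section RP

variable {X : Type*} [MeasurableSpace X] (m : Measure X) [IsProbabilityMeasure m]

/-- Precomposition with an equivalence of (finite) index sets preserves the
product of copies of a fixed measure. -/
lemma measurePreserving_precomp {ι₁ ι₂ : Type*} [Fintype ι₁] [Fintype ι₂]
    (τ : ι₁ ≃ ι₂) :
    MeasurePreserving (fun c : ι₂ → X => c ∘ τ)
      (Measure.pi fun _ : ι₂ => m) (Measure.pi fun _ : ι₁ => m) := by
  have hmeas : Measurable fun c : ι₂ → X => c ∘ τ :=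
    measurable_pi_lambda _ fun i => measurable_pi_apply (τ i)
  refine ⟨hmeas, ?_⟩
  refine (Measure.pi_eq fun s hs => ?_).symm
  rw [Measure.map_apply hmeas (MeasurableSet.univ_pi hs)]
  have hpre : (fun c : ι₂ → X => c ∘ τ) ⁻¹' (Set.pi Set.univ s)
      = Set.pi Set.univ fun j => s (τ.symm j) := by
    ext c
    simp only [Set.mem_preimage, Set.mem_pi, Set.mem_univ, forall_true_left, Function.comp]
    constructor
    · intro h j; simpa using h (τ.symm j)
    · intro h i; simpa using h (τ i)
  rw [hpre, Measure.pi_pi]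
  exact Equiv.prod_comp τ.symm fun i => m (s i)

/-- Precomposition with an index equivalence, as a measurable equivalence. -/
def precompEquiv {ι₁ ι₂ : Type*} [MeasurableSpace X] (τ : ι₁ ≃ ι₂) :
    (ι₂ → X) ≃ᵐ (ι₁ → X) where
  toEquiv := Equiv.arrowCongr τ.symm (Equiv.refl X)
  measurable_toFun := measurable_pi_lambda _ fun i => measurable_pi_apply (τ i)
  measurable_invFun := measurable_pi_lambda _ fun j => measurable_pi_apply (τ.symm j)

lemma integral_precomp {ι₁ ι₂ : Type*} [Fintype ι₁] [Fintype ι₂]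
    (τ : ι₁ ≃ ι₂) (g : (ι₁ → X) → ℝ) :
    ∫ c, g (c ∘ τ) ∂(Measure.pi fun _ : ι₂ => m)
      = ∫ α, g α ∂(Measure.pi fun _ : ι₁ => m) :=
  (measurePreserving_precomp m τ).integral_comp
    (precompEquiv (X := X) τ).measurableEmbedding g

end RP

section Core

variable {ι : Type*} [Fintype ι] {X : Type*} [MeasurableSpace X]
variable (p a : ι → Prop) [DecidablePred p] [DecidablePred a]

/-- The plus-side sites. -/
abbrev QtRP := {x : ι // a x ∧ ¬ p x}
/-- The complement of the plus side. -/
abbrev CtRP := {x : ι // ¬ (a x ∧ ¬ p x)}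
/-- The fixed (plane) sites, inside the complement of the plus side. -/
abbrev PtRP := {y : CtRP p a // p y.1}
/-- The minus-side sites, inside the complement of the plus side. -/
abbrev RtRP := {y : CtRP p a // ¬ p y.1}

/-- Gluing configurations on the three pieces into a full configuration. -/
noncomputable def tripleEquivRP :
    ((QtRP p a → X) × ((PtRP p a → X) × (RtRP p a → X))) ≃ᵐ (ι → X) :=
  ((MeasurableEquiv.refl (QtRP p a → X)).prodCongr
      (MeasurableEquiv.piEquivPiSubtypeProd (fun _ : CtRP p a => X)
        (fun y => p y.1)).symm).trans
    (MeasurableEquiv.piEquivPiSubtypeProd (fun _ : ι => X)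
      (fun x => a x ∧ ¬ p x)).symm

lemma tripleEquivRP_apply (α : QtRP p a → X) (η : PtRP p a → X) (c : RtRP p a → X)
    (x : ι) :
    tripleEquivRP p a (α, (η, c)) x
      = if h : a x ∧ ¬ p x then α ⟨x, h⟩
        else if h' : p x then η ⟨⟨x, h⟩, h'⟩ else c ⟨⟨x, h⟩, h'⟩ := by
  by_cases h : a x ∧ ¬ p x <;> by_cases h' : p x <;>
    simp [tripleEquivRP, MeasurableEquiv.piEquivPiSubtypeProd,
      MeasurableEquiv.prodCongr, Equiv.prodCongr_apply, Prod.map,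
      Equiv.piEquivPiSubtypeProd_symm_apply, h, h']


lemma integrable_of_bound {Z : Type*} [MeasurableSpace Z] (ν : Measure Z)
    [IsFiniteMeasure ν] (f : Z → ℝ) (C : ℝ) (hm : Measurable f)
    (hb : ∀ z, |f z| ≤ C) : Integrable f ν := by
  refine Integrable.mono' (integrable_const C) hm.aestronglyMeasurable ?_
  exact Filter.Eventually.of_forall fun z => by simpa [Real.norm_eq_abs] using hb z

variable {m : Measure X} [IsProbabilityMeasure m]

lemma measurePreserving_tripleEquivRP :
    MeasurePreserving (tripleEquivRP p a (X := X))
      ((Measure.pi fun _ : QtRP p a => m).prod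
        ((Measure.pi fun _ : PtRP p a => m).prod (Measure.pi fun _ : RtRP p a => m)))
      (Measure.pi fun _ : ι => m) := by
  have h1 : MeasurePreserving
      (MeasurableEquiv.piEquivPiSubtypeProd (fun _ : ι => X) (fun x => a x ∧ ¬ p x)).symm
      ((Measure.pi fun _ : QtRP p a => m).prod (Measure.pi fun _ : CtRP p a => m))
      (Measure.pi fun _ : ι => m) :=
    (measurePreserving_piEquivPiSubtypeProd (fun _ : ι => m) (fun x => a x ∧ ¬ p x)).symm _
  have h2 : MeasurePreserving
      (MeasurableEquiv.piEquivPiSubtypeProd (fun _ : CtRP p a => X) (fun y => p y.1)).symm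
      ((Measure.pi fun _ : PtRP p a => m).prod (Measure.pi fun _ : RtRP p a => m))
      (Measure.pi fun _ : CtRP p a => m) :=
    (measurePreserving_piEquivPiSubtypeProd (fun _ : CtRP p a => m) (fun y => p y.1)).symm _
  have h3 := (MeasurePreserving.id (Measure.pi fun _ : QtRP p a => m)).prod h2
  exact h1.comp h3

/-- The reflection as an equivalence from the plus side to the minus side. -/
def reflQR (σ : ι → ι) (hσ : ∀ x, σ (σ x) = x) (hpa : ∀ x, p x → a x)
    (hplus : ∀ x, a x → ¬ p x → ¬ a (σ x))
    (hminus : ∀ x, ¬ a x → a (σ x) ∧ ¬ p (σ x)) :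
    QtRP p a ≃ RtRP p a where
  toFun s := ⟨⟨σ s.1, fun h => hplus s.1 s.2.1 s.2.2 h.1⟩,
    fun hp => hplus s.1 s.2.1 s.2.2 (hpa _ hp)⟩
  invFun y := ⟨σ y.1.1, hminus y.1.1 fun ha => y.1.2 ⟨ha, y.2⟩⟩
  left_inv s := Subtype.ext (hσ s.1)
  right_inv y := Subtype.ext (Subtype.ext (hσ y.1.1))

/-- The partial partition function over the plus-side spins. -/
noncomputable def NNfun (m : Measure X) (x₀ : X) (w : (ι → X) → ℝ) :
    (PtRP p a → X) → ℝ :=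
  fun η => ∫ α, w (tripleEquivRP p a (α, (η, fun _ => x₀)))
    ∂(Measure.pi fun _ : QtRP p a => m)


lemma rp_core (x₀ : X) (σ : ι → ι) (hσ : ∀ x, σ (σ x) = x)
    (hfix : ∀ x, p x → σ x = x) (hpa : ∀ x, p x → a x)
    (hplus : ∀ x, a x → ¬ p x → ¬ a (σ x))
    (hminus : ∀ x, ¬ a x → a (σ x) ∧ ¬ p (σ x))
    (w w' : (ι → X) → ℝ) (hw : Measurable w) (hw' : Measurable w')
    (Cw Cw' : ℝ) (hCw : ∀ φ, |w φ| ≤ Cw) (hCw' : ∀ φ, |w' φ| ≤ Cw')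
    (hwd : ∀ φ ψ : ι → X, (∀ x, a x → φ x = ψ x) → w φ = w ψ)
    (hw'd : ∀ φ ψ : ι → X, (∀ x, a x → φ x = ψ x) → w' φ = w' ψ) :
    ∫ φ, w φ * w' (φ ∘ σ) ∂(Measure.pi fun _ : ι => m)
      = ∫ η, (NNfun p a m x₀ w η) * (NNfun p a m x₀ w' η)
          ∂(Measure.pi fun _ : PtRP p a => m) := by
  have hCw0 : 0 ≤ Cw := le_trans (abs_nonneg _) (hCw fun _ => x₀)
  have hCw'0 : 0 ≤ Cw' := le_trans (abs_nonneg _) (hCw' fun _ => x₀)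
  set T := tripleEquivRP p a (X := X) with hT
  set τ := reflQR p a σ hσ hpa hplus hminus with hτ
  set W : (QtRP p a → X) → (PtRP p a → X) → ℝ :=
    fun α η => w (T (α, (η, fun _ => x₀))) with hW
  set W' : (QtRP p a → X) → (PtRP p a → X) → ℝ :=
    fun α η => w' (T (α, (η, fun _ => x₀))) with hW'
  -- the two key independence facts
  have hWeq : ∀ (α : QtRP p a → X) (η : PtRP p a → X) (c : RtRP p a → X),
      w (T (α, (η, c))) = W α η := by
    intro α η c
    refine hwd _ _ fun x hax => ?_
    rw [tripleEquivRP_apply, tripleEquivRP_apply]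
    by_cases hp : p x
    · rw [dif_neg (fun hh : a x ∧ ¬ p x => hh.2 hp), dif_neg (fun hh : a x ∧ ¬ p x => hh.2 hp),
        dif_pos hp, dif_pos hp]
    · rw [dif_pos ⟨hax, hp⟩, dif_pos ⟨hax, hp⟩]
  have hW'eq : ∀ (α : QtRP p a → X) (η : PtRP p a → X) (c : RtRP p a → X),
      w' (T (α, (η, c)) ∘ σ) = W' (fun s => c (τ s)) η := by
    intro α η c
    refine hw'd _ _ fun x hax => ?_
    simp only [Function.comp_apply]
    rw [tripleEquivRP_apply, tripleEquivRP_apply]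
    by_cases hp : p x
    · rw [hfix x hp]
      rw [dif_neg (fun hh : a x ∧ ¬ p x => hh.2 hp), dif_pos hp,
        dif_neg (fun hh : a x ∧ ¬ p x => hh.2 hp), dif_pos hp]
    · have hq : a x ∧ ¬ p x := ⟨hax, hp⟩
      have hna : ¬ a (σ x) := hplus x hax hp
      have hnp : ¬ p (σ x) := fun hh => hna (hpa _ hh)
      have hnq : ¬ (a (σ x) ∧ ¬ p (σ x)) := fun hh => hna hh.1
      rw [dif_neg hnq, dif_neg hnp, dif_pos hq]
      rfl
  -- measurability
  have hWm : Measurable (fun z : (QtRP p a → X) × (PtRP p a → X) => W z.1 z.2) :=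
    hw.comp (T.measurable.comp
      (measurable_fst.prodMk (measurable_snd.prodMk measurable_const)))
  have hW'm : Measurable (fun z : (QtRP p a → X) × (PtRP p a → X) => W' z.1 z.2) :=
    hw'.comp (T.measurable.comp
      (measurable_fst.prodMk (measurable_snd.prodMk measurable_const)))
  set N' : (PtRP p a → X) → ℝ :=
    fun η => ∫ α, W' α η ∂(Measure.pi fun _ : QtRP p a => m) with hN'
  have hN'eq : N' = NNfun p a m x₀ w' := rfl
  have hN'm : Measurable N' := by
    have := (hW'm.stronglyMeasurable).integral_prod_left'
      (μ := (Measure.pi fun _ : QtRP p a => m))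
    exact this.measurable
  have hN'b : ∀ η, |N' η| ≤ Cw' := by
    intro η
    have h := norm_integral_le_of_norm_le_const
      (μ := (Measure.pi fun _ : QtRP p a => m))
      (f := fun α => W' α η) (C := Cw')
      (Filter.Eventually.of_forall fun α => by
        simpa [Real.norm_eq_abs] using hCw' (T (α, (η, fun _ => x₀))))
    simpa [Real.norm_eq_abs, measure_univ] using h
  -- the full integrand on the triple product space
  set F : (QtRP p a → X) × ((PtRP p a → X) × (RtRP p a → X)) → ℝ :=
    fun z => W z.1 z.2.1 * W' (fun s => z.2.2 (τ s)) z.2.1 with hF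
  have hFm : Measurable F := by
    refine Measurable.mul ?_ ?_
    · exact hWm.comp (measurable_fst.prodMk (measurable_fst.comp measurable_snd))
    · have h1 : Measurable fun z : (QtRP p a → X) × ((PtRP p a → X) × (RtRP p a → X)) =>
          (fun s : QtRP p a => z.2.2 (τ s)) :=
        measurable_pi_lambda
          (fun (z : (QtRP p a → X) × ((PtRP p a → X) × (RtRP p a → X))) (s : QtRP p a) => z.2.2 (τ s))
          (fun s => (measurable_pi_apply (τ s)).comp (measurable_snd.comp measurable_snd))
      exact hW'm.comp (h1.prodMk (measurable_fst.comp measurable_snd))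
  have hFb : ∀ z, |F z| ≤ Cw * Cw' := fun z => by
    rw [hF, abs_mul]
    exact mul_le_mul (hCw _) (hCw' _) (abs_nonneg _) hCw0
  have hFint : Integrable F
      ((Measure.pi fun _ : QtRP p a => m).prod
        ((Measure.pi fun _ : PtRP p a => m).prod (Measure.pi fun _ : RtRP p a => m))) :=
    integrable_of_bound _ F (Cw * Cw') hFm hFb
  -- step 1 : change of variables to the triple product space
  have step1 : ∫ φ, w φ * w' (φ ∘ σ) ∂(Measure.pi fun _ : ι => m)
      = ∫ z, F z ∂((Measure.pi fun _ : QtRP p a => m).prod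
          ((Measure.pi fun _ : PtRP p a => m).prod (Measure.pi fun _ : RtRP p a => m))) := by
    rw [← (measurePreserving_tripleEquivRP p a).integral_comp T.measurableEmbedding
      (fun φ => w φ * w' (φ ∘ σ))]
    refine integral_congr_ae (Filter.Eventually.of_forall fun z => ?_)
    exact congrArg₂ (· * ·) (hWeq z.1 z.2.1 z.2.2) (hW'eq z.1 z.2.1 z.2.2)
  rw [step1, MeasureTheory.integral_prod _ hFint]
  -- step 2 : inner integral over the (plane, minus) coordinates
  have step2 : ∀ α : QtRP p a → X,
      (∫ y, F (α, y) ∂((Measure.pi fun _ : PtRP p a => m).prod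
        (Measure.pi fun _ : RtRP p a => m)))
      = ∫ η, W α η * N' η ∂(Measure.pi fun _ : PtRP p a => m) := by
    intro α
    have hGm : Measurable fun y : (PtRP p a → X) × (RtRP p a → X) => F (α, y) :=
      hFm.comp measurable_prodMk_left
    have hGint : Integrable (fun y => F (α, y))
        ((Measure.pi fun _ : PtRP p a => m).prod (Measure.pi fun _ : RtRP p a => m)) :=
      integrable_of_bound _ _ (Cw * Cw') hGm fun y => hFb (α, y)
    rw [MeasureTheory.integral_prod _ hGint]
    refine integral_congr_ae (Filter.Eventually.of_forall fun η => ?_)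
    show (∫ c, F (α, (η, c)) ∂(Measure.pi fun _ : RtRP p a => m)) = W α η * N' η
    have h0 : (∫ c, F (α, (η, c)) ∂(Measure.pi fun _ : RtRP p a => m))
        = ∫ c, W α η * W' (fun s => c (τ s)) η ∂(Measure.pi fun _ : RtRP p a => m) := rfl
    rw [h0, MeasureTheory.integral_const_mul]
    congr 1
    exact integral_precomp m τ (fun α' => W' α' η)
  simp only [step2]
  -- step 3 : swap the two remaining integrals
  have hGm2 : Measurable fun z : (QtRP p a → X) × (PtRP p a → X) => W z.1 z.2 * N' z.2 :=
    hWm.mul (hN'm.comp measurable_snd)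
  have hGint2 : Integrable (fun z : (QtRP p a → X) × (PtRP p a → X) => W z.1 z.2 * N' z.2)
      ((Measure.pi fun _ : QtRP p a => m).prod (Measure.pi fun _ : PtRP p a => m)) := by
    refine integrable_of_bound _ _ (Cw * Cw') hGm2 fun z => ?_
    rw [abs_mul]
    exact mul_le_mul (hCw _) (hN'b _) (abs_nonneg _) hCw0
  have hswap := MeasureTheory.integral_integral (f := fun α η => W α η * N' η) hGint2
  rw [hswap, MeasureTheory.integral_prod_symm _ hGint2]
  refine integral_congr_ae (Filter.Eventually.of_forall fun η => ?_)
  show (∫ α, W α η * N' η ∂(Measure.pi fun _ : QtRP p a => m))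
      = NNfun p a m x₀ w η * NNfun p a m x₀ w' η
  rw [MeasureTheory.integral_mul_const]
  rfl


/-- **Reflection positivity inequality** for a product measure and a reflection `σ`. -/
lemma rp_ineq (σ : ι → ι) (hσ : ∀ x, σ (σ x) = x)
    (hfix : ∀ x, p x → σ x = x) (hpa : ∀ x, p x → a x)
    (hplus : ∀ x, a x → ¬ p x → ¬ a (σ x))
    (hminus : ∀ x, ¬ a x → a (σ x) ∧ ¬ p (σ x))
    (u v : (ι → X) → ℝ) (hu : Measurable u) (hv : Measurable v)
    (Cu Cv : ℝ) (hCu : ∀ φ, |u φ| ≤ Cu) (hCv : ∀ φ, |v φ| ≤ Cv)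
    (hud : ∀ φ ψ : ι → X, (∀ x, a x → φ x = ψ x) → u φ = u ψ)
    (hvd : ∀ φ ψ : ι → X, (∀ x, a x → φ x = ψ x) → v φ = v ψ) :
    ∫ φ, u φ * v (φ ∘ σ) ∂(Measure.pi fun _ : ι => m)
      ≤ (1 / 2) * ∫ φ, u φ * u (φ ∘ σ) ∂(Measure.pi fun _ : ι => m)
        + (1 / 2) * ∫ φ, v φ * v (φ ∘ σ) ∂(Measure.pi fun _ : ι => m) := by
  have hne : Nonempty X := by
    by_contra h
    have h0 : (Set.univ : Set X) = ∅ := by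
      simp [Set.eq_empty_iff_forall_notMem]; intro x; exact h ⟨x⟩
    have := measure_univ (μ := m)
    rw [h0, measure_empty] at this
    exact zero_ne_one this
  obtain ⟨x₀⟩ := hne
  rw [rp_core p a x₀ σ hσ hfix hpa hplus hminus u v hu hv Cu Cv hCu hCv hud hvd,
    rp_core p a x₀ σ hσ hfix hpa hplus hminus u u hu hu Cu Cu hCu hCu hud hud,
    rp_core p a x₀ σ hσ hfix hpa hplus hminus v v hv hv Cv Cv hCv hCv hvd hvd]
  set Nu := NNfun p a m x₀ u with hNu
  set Nv := NNfun p a m x₀ v with hNv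
  -- measurability and bounds for the partial integrals
  have hWum : Measurable (fun z : (QtRP p a → X) × (PtRP p a → X) =>
      u (tripleEquivRP p a (z.1, (z.2, fun _ => x₀)))) :=
    hu.comp ((tripleEquivRP p a).measurable.comp
      (measurable_fst.prodMk (measurable_snd.prodMk measurable_const)))
  have hWvm : Measurable (fun z : (QtRP p a → X) × (PtRP p a → X) =>
      v (tripleEquivRP p a (z.1, (z.2, fun _ => x₀)))) :=
    hv.comp ((tripleEquivRP p a).measurable.comp
      (measurable_fst.prodMk (measurable_snd.prodMk measurable_const)))
  have hNum : Measurable Nu :=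
    ((hWum.stronglyMeasurable).integral_prod_left'
      (μ := (Measure.pi fun _ : QtRP p a => m))).measurable
  have hNvm : Measurable Nv :=
    ((hWvm.stronglyMeasurable).integral_prod_left'
      (μ := (Measure.pi fun _ : QtRP p a => m))).measurable
  have hNub : ∀ η, |Nu η| ≤ Cu := by
    intro η
    have h := norm_integral_le_of_norm_le_const
      (μ := (Measure.pi fun _ : QtRP p a => m))
      (f := fun α => u (tripleEquivRP p a (α, (η, fun _ => x₀)))) (C := Cu)
      (Filter.Eventually.of_forall fun α => by simpa [Real.norm_eq_abs] using hCu _)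
    simpa [Real.norm_eq_abs, measure_univ, NNfun, hNu] using h
  have hNvb : ∀ η, |Nv η| ≤ Cv := by
    intro η
    have h := norm_integral_le_of_norm_le_const
      (μ := (Measure.pi fun _ : QtRP p a => m))
      (f := fun α => v (tripleEquivRP p a (α, (η, fun _ => x₀)))) (C := Cv)
      (Filter.Eventually.of_forall fun α => by simpa [Real.norm_eq_abs] using hCv _)
    simpa [Real.norm_eq_abs, measure_univ, NNfun, hNv] using h
  have hCu0 : 0 ≤ Cu := le_trans (abs_nonneg _) (hCu fun _ => x₀)
  have hCv0 : 0 ≤ Cv := le_trans (abs_nonneg _) (hCv fun _ => x₀)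
  have huv : Integrable (fun η => Nu η * Nv η) (Measure.pi fun _ : PtRP p a => m) := by
    refine integrable_of_bound _ _ (Cu * Cv) (hNum.mul hNvm) fun η => ?_
    rw [abs_mul]; exact mul_le_mul (hNub _) (hNvb _) (abs_nonneg _) hCu0
  have huu : Integrable (fun η => Nu η * Nu η) (Measure.pi fun _ : PtRP p a => m) := by
    refine integrable_of_bound _ _ (Cu * Cu) (hNum.mul hNum) fun η => ?_
    rw [abs_mul]; exact mul_le_mul (hNub _) (hNub _) (abs_nonneg _) hCu0
  have hvv : Integrable (fun η => Nv η * Nv η) (Measure.pi fun _ : PtRP p a => m) := by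
    refine integrable_of_bound _ _ (Cv * Cv) (hNvm.mul hNvm) fun η => ?_
    rw [abs_mul]; exact mul_le_mul (hNvb _) (hNvb _) (abs_nonneg _) hCv0
  have key : ∫ η, Nu η * Nv η ∂(Measure.pi fun _ : PtRP p a => m)
      ≤ ∫ η, (1 / 2) * (Nu η * Nu η) + (1 / 2) * (Nv η * Nv η)
          ∂(Measure.pi fun _ : PtRP p a => m) := by
    refine integral_mono huv ((huu.const_mul _).add (hvv.const_mul _)) fun η => ?_
    nlinarith [sq_nonneg (Nu η - Nv η)]
  calc ∫ η, Nu η * Nv η ∂(Measure.pi fun _ : PtRP p a => m)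
      ≤ ∫ η, (1 / 2) * (Nu η * Nu η) + (1 / 2) * (Nv η * Nv η)
          ∂(Measure.pi fun _ : PtRP p a => m) := key
    _ = (1 / 2) * ∫ η, Nu η * Nu η ∂(Measure.pi fun _ : PtRP p a => m)
        + (1 / 2) * ∫ η, Nv η * Nv η ∂(Measure.pi fun _ : PtRP p a => m) := by
      rw [integral_add (huu.const_mul _) (hvv.const_mul _),
        MeasureTheory.integral_const_mul, MeasureTheory.integral_const_mul]

end Core

section Torus

variable {d L : ℕ} [NeZero L]

/-- Reflection of the `i`-th coordinate: `x_i ↦ c - x_i`. -/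
def torusRefl (i : Fin d) (c : ZMod L) : TorusPt d L → TorusPt d L :=
  fun x => Function.update x i (c - x i)

lemma torusRefl_apply_self (i : Fin d) (c : ZMod L) (x : TorusPt d L) :
    torusRefl i c x i = c - x i := Function.update_self i _ x

lemma torusRefl_apply_ne (i : Fin d) (c : ZMod L) (x : TorusPt d L) {k : Fin d}
    (hk : k ≠ i) : torusRefl i c x k = x k := Function.update_of_ne hk _ x

lemma torusRefl_invol (i : Fin d) (c : ZMod L) (x : TorusPt d L) :
    torusRefl i c (torusRefl i c x) = x := by
  funext k
  rcases eq_or_ne k i with rfl | hk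
  · rw [torusRefl_apply_self, torusRefl_apply_self]; ring
  · rw [torusRefl_apply_ne _ _ _ hk, torusRefl_apply_ne _ _ _ hk]

lemma torusRefl_update (i : Fin d) (c : ZMod L) (x : TorusPt d L) (j : Fin d) (v : ZMod L) :
    torusRefl i c (Function.update x j v)
      = if j = i then Function.update (torusRefl i c x) i (c - v)
        else Function.update (torusRefl i c x) j v := by
  rcases eq_or_ne j i with rfl | hj
  · rw [if_pos rfl]
    funext k
    rcases eq_or_ne k j with rfl | hk
    · rw [torusRefl_apply_self, Function.update_self, Function.update_self]
    · rw [torusRefl_apply_ne _ _ _ hk, Function.update_of_ne hk, Function.update_of_ne hk,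
        torusRefl_apply_ne _ _ _ hk]
  · rw [if_neg hj]
    funext k
    rcases eq_or_ne k i with rfl | hki
    · rw [torusRefl_apply_self, Function.update_of_ne (Ne.symm hj),
        Function.update_of_ne (Ne.symm hj), torusRefl_apply_self]
    · rcases eq_or_ne k j with rfl | hkj
      · rw [torusRefl_apply_ne _ _ _ hki, Function.update_self, Function.update_self]
      · rw [torusRefl_apply_ne _ _ _ hki, Function.update_of_ne hkj, Function.update_of_ne hkj,
          torusRefl_apply_ne _ _ _ hki]

lemma torusAdj_refl (i : Fin d) (c : ZMod L) {x y : TorusPt d L} (h : torusAdj x y) :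
    torusAdj (torusRefl i c x) (torusRefl i c y) := by
  rcases h with ⟨j, hj | hj⟩ <;> subst hj <;> rcases eq_or_ne j i with rfl | hji
  · refine ⟨j, Or.inr ?_⟩
    rw [torusRefl_update, if_pos rfl]
    congr 1
    rw [torusRefl_apply_self]; ring
  · refine ⟨j, Or.inl ?_⟩
    rw [torusRefl_update, if_neg hji]
    congr 1
    rw [torusRefl_apply_ne _ _ _ hji]
  · refine ⟨j, Or.inl ?_⟩
    rw [torusRefl_update, if_pos rfl]
    congr 1
    rw [torusRefl_apply_self]; ring
  · refine ⟨j, Or.inr ?_⟩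
    rw [torusRefl_update, if_neg hji]
    congr 1
    rw [torusRefl_apply_ne _ _ _ hji]

lemma torusAdj_refl_iff (i : Fin d) (c : ZMod L) (x y : TorusPt d L) :
    torusAdj (torusRefl i c x) (torusRefl i c y) ↔ torusAdj x y := by
  constructor
  · intro h
    have := torusAdj_refl i c h
    rwa [torusRefl_invol, torusRefl_invol] at this
  · exact torusAdj_refl i c

lemma update_add_torus (x t : TorusPt d L) (j : Fin d) (v : ZMod L) :
    Function.update x j v + t = Function.update (x + t) j (v + t j) := by
  funext k
  rcases eq_or_ne k j with rfl | hk
  · simp [Function.update_self]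
  · simp [Function.update_of_ne hk]

lemma torusAdj_translate (t : TorusPt d L) {x y : TorusPt d L} (h : torusAdj x y) :
    torusAdj (x + t) (y + t) := by
  rcases h with ⟨j, hj | hj⟩ <;> subst hj
  · refine ⟨j, Or.inl ?_⟩
    rw [update_add_torus]
    congr 1
    simp [add_right_comm]
  · refine ⟨j, Or.inr ?_⟩
    rw [update_add_torus]
    congr 1
    simp [sub_add_eq_add_sub]

lemma torusAdj_translate_iff (t : TorusPt d L) (x y : TorusPt d L) :
    torusAdj (x + t) (y + t) ↔ torusAdj x y := by
  constructor
  · intro h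
    have := torusAdj_translate (-t) h
    simpa using this
  · exact torusAdj_translate t

end Torus


section Spin

open scoped RealInnerProductSpace

instance sphereUniform_isProbability (N : ℕ) [NeZero N] :
    IsProbabilityMeasure (sphereUniform N) := by
  constructor
  rw [sphereUniform, Measure.smul_apply, smul_eq_mul]
  refine ENNReal.inv_mul_cancel ?_ ?_
  · rw [Measure.toSphere_apply_univ]
    refine mul_ne_zero ?_ (measure_ball_pos _ _ one_pos).ne'
    simp only [ne_eq, Nat.cast_eq_zero]
    simp [finrank_euclideanSpace_fin, NeZero.ne N]
  · rw [Measure.toSphere_apply_univ]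
    exact ENNReal.mul_ne_top (ENNReal.natCast_ne_top _) measure_ball_lt_top.ne

variable {d L N : ℕ} [NeZero L] [NeZero N]

lemma measurable_spinApply (x : TorusPt d L) :
    Measurable fun φ : SpinCfg d L N => (φ x : EuclideanSpace ℝ (Fin N)) :=
  measurable_subtype_coe.comp (measurable_pi_apply x)

lemma measurable_spinCoord (x : TorusPt d L) :
    Measurable fun φ : SpinCfg d L N => (φ x : EuclideanSpace ℝ (Fin N)) 0 :=
  ((EuclideanSpace.proj (0 : Fin N)).continuous.measurable).comp (measurable_spinApply x)

lemma measurable_spinInner (x y : TorusPt d L) :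
    Measurable fun φ : SpinCfg d L N =>
      ⟪(φ x : EuclideanSpace ℝ (Fin N)), (φ y : EuclideanSpace ℝ (Fin N))⟫ :=
  (measurable_spinApply x).inner (measurable_spinApply y)

lemma spin_norm_one (φ : SpinCfg d L N) (x : TorusPt d L) :
    ‖(φ x : EuclideanSpace ℝ (Fin N))‖ = 1 := by
  have h := (φ x).2
  rwa [mem_sphere_iff_norm, sub_zero] at h

lemma spin_inner_abs_le_one (φ : SpinCfg d L N) (x y : TorusPt d L) :
    |⟪(φ x : EuclideanSpace ℝ (Fin N)), (φ y : EuclideanSpace ℝ (Fin N))⟫| ≤ 1 := by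
  have h := abs_real_inner_le_norm
    (φ x : EuclideanSpace ℝ (Fin N)) (φ y : EuclideanSpace ℝ (Fin N))
  rwa [spin_norm_one, spin_norm_one, mul_one] at h

lemma coord_abs_le_one (u : EuclideanSpace ℝ (Fin N)) (hu : ‖u‖ = 1) (j : Fin N) :
    |u j| ≤ 1 := by
  have h1 : |u j| = Real.sqrt ((u j) ^ 2) := (Real.sqrt_sq_eq_abs _).symm
  have h2 : (u j) ^ 2 ≤ ∑ k, (u k) ^ 2 :=
    Finset.single_le_sum (f := fun k => (u k) ^ 2) (fun k _ => sq_nonneg _) (Finset.mem_univ j)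
  have h3 : Real.sqrt (∑ k, (u k) ^ 2) = 1 := by
    have := EuclideanSpace.norm_eq u
    simp only [Real.norm_eq_abs, sq_abs] at this
    rw [← this, hu]
  calc |u j| = Real.sqrt ((u j) ^ 2) := h1
    _ ≤ Real.sqrt (∑ k, (u k) ^ 2) := Real.sqrt_le_sqrt h2
    _ = 1 := h3

lemma spin_coord_abs_le_one (φ : SpinCfg d L N) (x : TorusPt d L) :
    |(φ x : EuclideanSpace ℝ (Fin N)) 0| ≤ 1 :=
  coord_abs_le_one _ (spin_norm_one φ x) 0

lemma ham_bound_aux (f : TorusPt d L → TorusPt d L → ℝ) (hf : ∀ x y, |f x y| ≤ 1) :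
    |(-(1/2) : ℝ) * ∑ x : TorusPt d L, ∑ y : TorusPt d L, f x y|
      ≤ (Fintype.card (TorusPt d L) : ℝ) ^ 2 := by
  set K : ℝ := (Fintype.card (TorusPt d L) : ℝ) with hK
  have hK0 : 0 ≤ K := Nat.cast_nonneg _
  have hsum : |∑ x : TorusPt d L, ∑ y : TorusPt d L, f x y| ≤ K * K := by
    calc |∑ x : TorusPt d L, ∑ y : TorusPt d L, f x y|
        ≤ ∑ x : TorusPt d L, |∑ y : TorusPt d L, f x y| := Finset.abs_sum_le_sum_abs _ _
      _ ≤ ∑ _x : TorusPt d L, K := by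
          refine Finset.sum_le_sum fun x _ => ?_
          calc |∑ y : TorusPt d L, f x y| ≤ ∑ y : TorusPt d L, |f x y| :=
                Finset.abs_sum_le_sum_abs _ _
            _ ≤ ∑ _y : TorusPt d L, (1 : ℝ) := Finset.sum_le_sum fun y _ => hf x y
            _ = K := by simp [hK]
      _ = K * K := by simp [hK, mul_comm]
  calc |(-(1/2) : ℝ) * ∑ x : TorusPt d L, ∑ y : TorusPt d L, f x y|
      = (1/2) * |∑ x : TorusPt d L, ∑ y : TorusPt d L, f x y| := by
        rw [abs_mul]; norm_num
    _ ≤ (1/2) * (K * K) := by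
        refine mul_le_mul_of_nonneg_left hsum (by norm_num)
    _ ≤ K ^ 2 := by nlinarith

/-- The weight assigning each edge to the plus or minus half (plane edges split evenly). -/
noncomputable def wplus (p a : TorusPt d L → Prop) [DecidablePred p] [DecidablePred a]
    (x y : TorusPt d L) : ℝ :=
  if ¬ a x ∨ ¬ a y then 0 else if p x ∧ p y then 1/2 else 1

lemma wplus_abs_le_one (p a : TorusPt d L → Prop) [DecidablePred p] [DecidablePred a]
    (x y : TorusPt d L) : |wplus p a x y| ≤ 1 := by
  unfold wplus; split_ifs <;> rw [abs_of_nonneg (by norm_num)] <;> norm_num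

/-- The half-Hamiltonian associated with the plus side of a reflection. -/
noncomputable def hamPlus (p a : TorusPt d L → Prop) [DecidablePred p] [DecidablePred a]
    (φ : SpinCfg d L N) : ℝ :=
  -(1/2) * ∑ x : TorusPt d L, ∑ y : TorusPt d L,
    if torusAdj x y then
      wplus p a x y *
        ⟪(φ x : EuclideanSpace ℝ (Fin N)), (φ y : EuclideanSpace ℝ (Fin N))⟫
    else 0

lemma measurable_hamiltonian : Measurable (hamiltonian (d := d) (L := L) (N := N)) := by
  unfold hamiltonian
  refine Measurable.const_mul ?_ _
  refine Finset.measurable_sum _ fun x _ => ?_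
  refine Finset.measurable_sum _ fun y _ => ?_
  by_cases h : torusAdj x y
  · simp only [if_pos h]; exact measurable_spinInner x y
  · simp only [if_neg h]; exact measurable_const

lemma measurable_hamPlus (p a : TorusPt d L → Prop) [DecidablePred p] [DecidablePred a] :
    Measurable (hamPlus (d := d) (L := L) (N := N) p a) := by
  unfold hamPlus
  refine Measurable.const_mul ?_ _
  refine Finset.measurable_sum _ fun x _ => ?_
  refine Finset.measurable_sum _ fun y _ => ?_
  by_cases h : torusAdj x y
  · simp only [if_pos h]; exact (measurable_spinInner x y).const_mul _
  · simp only [if_neg h]; exact measurable_const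

lemma hamiltonian_abs_le (φ : SpinCfg d L N) :
    |hamiltonian φ| ≤ (Fintype.card (TorusPt d L) : ℝ) ^ 2 := by
  refine ham_bound_aux _ fun x y => ?_
  by_cases h : torusAdj x y
  · simp only [if_pos h]; exact spin_inner_abs_le_one φ x y
  · simp only [if_neg h, abs_zero]; norm_num

lemma hamPlus_abs_le (p a : TorusPt d L → Prop) [DecidablePred p] [DecidablePred a]
    (φ : SpinCfg d L N) :
    |hamPlus p a φ| ≤ (Fintype.card (TorusPt d L) : ℝ) ^ 2 := by
  refine ham_bound_aux _ fun x y => ?_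
  by_cases h : torusAdj x y
  · simp only [if_pos h, abs_mul]
    calc |wplus p a x y| * |⟪(φ x : EuclideanSpace ℝ (Fin N)), (φ y : EuclideanSpace ℝ (Fin N))⟫|
        ≤ 1 * 1 := mul_le_mul (wplus_abs_le_one p a x y) (spin_inner_abs_le_one φ x y)
          (abs_nonneg _) zero_le_one
      _ = 1 := one_mul 1
  · simp only [if_neg h, abs_zero]; norm_num

lemma hamPlus_dep (p a : TorusPt d L → Prop) [DecidablePred p] [DecidablePred a]
    (φ ψ : SpinCfg d L N) (h : ∀ x, a x → φ x = ψ x) :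
    hamPlus p a φ = hamPlus p a ψ := by
  unfold hamPlus
  congr 1
  refine Finset.sum_congr rfl fun x _ => Finset.sum_congr rfl fun y _ => ?_
  by_cases hadj : torusAdj x y
  · simp only [if_pos hadj]
    by_cases hax : a x
    · by_cases hay : a y
      · rw [h x hax, h y hay]
      · simp [wplus, hay]
    · simp [wplus, hax]
  · simp [hadj]

lemma sum_sum_comp {α : Type*} [Fintype α] (e : Equiv.Perm α) (F : α → α → ℝ) :
    (∑ x, ∑ y, F (e x) (e y)) = ∑ x, ∑ y, F x y := by
  calc (∑ x, ∑ y, F (e x) (e y)) = ∑ x, ∑ y, F (e x) y :=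
      Finset.sum_congr rfl fun x _ => Equiv.sum_comp e (fun y => F (e x) y)
    _ = ∑ x, ∑ y, F x y := Equiv.sum_comp e (fun x => ∑ y, F x y)

lemma hamiltonian_comp (T : Equiv.Perm (TorusPt d L))
    (hadj : ∀ x y, torusAdj (T x) (T y) ↔ torusAdj x y) (φ : SpinCfg d L N) :
    hamiltonian (fun x => φ (T x)) = hamiltonian φ := by
  unfold hamiltonian
  congr 1
  calc (∑ x : TorusPt d L, ∑ y : TorusPt d L,
        if torusAdj x y then
          ⟪(φ (T x) : EuclideanSpace ℝ (Fin N)), (φ (T y) : EuclideanSpace ℝ (Fin N))⟫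
        else 0)
      = ∑ x : TorusPt d L, ∑ y : TorusPt d L,
        if torusAdj (T x) (T y) then
          ⟪(φ (T x) : EuclideanSpace ℝ (Fin N)), (φ (T y) : EuclideanSpace ℝ (Fin N))⟫
        else 0 :=
        Finset.sum_congr rfl fun x _ => Finset.sum_congr rfl fun y _ =>
          if_congr (hadj x y).symm rfl rfl
    _ = ∑ x : TorusPt d L, ∑ y : TorusPt d L,
        if torusAdj x y then
          ⟪(φ x : EuclideanSpace ℝ (Fin N)), (φ y : EuclideanSpace ℝ (Fin N))⟫
        else 0 :=
        sum_sum_comp T (fun u v : TorusPt d L => if torusAdj u v then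
          ⟪(φ u : EuclideanSpace ℝ (Fin N)), (φ v : EuclideanSpace ℝ (Fin N))⟫ else 0)

lemma ham_split (p a : TorusPt d L → Prop) [DecidablePred p] [DecidablePred a]
    (σE : Equiv.Perm (TorusPt d L))
    (hσ : ∀ x, σE (σE x) = x)
    (hadj : ∀ x y, torusAdj (σE x) (σE y) ↔ torusAdj x y)
    (hwsum : ∀ x y, torusAdj x y → wplus p a x y + wplus p a (σE x) (σE y) = 1)
    (φ : SpinCfg d L N) :
    hamiltonian φ = hamPlus p a φ + hamPlus p a (fun x => φ (σE x)) := by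
  have h2 : hamPlus p a (fun x => φ (σE x))
      = -(1/2) * ∑ x : TorusPt d L, ∑ y : TorusPt d L,
          if torusAdj x y then
            wplus p a (σE x) (σE y) *
              ⟪(φ x : EuclideanSpace ℝ (Fin N)), (φ y : EuclideanSpace ℝ (Fin N))⟫
          else 0 := by
    unfold hamPlus
    congr 1
    calc (∑ x : TorusPt d L, ∑ y : TorusPt d L,
          if torusAdj x y then
            wplus p a x y *
              ⟪(φ (σE x) : EuclideanSpace ℝ (Fin N)), (φ (σE y) : EuclideanSpace ℝ (Fin N))⟫
          else 0)
        = ∑ x : TorusPt d L, ∑ y : TorusPt d L,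
          if torusAdj (σE x) (σE y) then
            wplus p a (σE (σE x)) (σE (σE y)) *
              ⟪(φ (σE x) : EuclideanSpace ℝ (Fin N)), (φ (σE y) : EuclideanSpace ℝ (Fin N))⟫
          else 0 := by
          refine Finset.sum_congr rfl fun x _ => Finset.sum_congr rfl fun y _ =>
            if_congr (hadj x y).symm ?_ rfl
          rw [hσ x, hσ y]
      _ = ∑ x : TorusPt d L, ∑ y : TorusPt d L,
          if torusAdj x y then
            wplus p a (σE x) (σE y) *
              ⟪(φ x : EuclideanSpace ℝ (Fin N)), (φ y : EuclideanSpace ℝ (Fin N))⟫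
          else 0 :=
          sum_sum_comp σE (fun u v : TorusPt d L => if torusAdj u v then
            wplus p a (σE u) (σE v) *
              ⟪(φ u : EuclideanSpace ℝ (Fin N)), (φ v : EuclideanSpace ℝ (Fin N))⟫ else 0)
  rw [h2]
  unfold hamiltonian hamPlus
  rw [← mul_add, ← Finset.sum_add_distrib]
  congr 1
  refine Finset.sum_congr rfl fun x _ => ?_
  rw [← Finset.sum_add_distrib]
  refine Finset.sum_congr rfl fun y _ => ?_
  by_cases h : torusAdj x y
  · simp only [if_pos h]
    rw [← add_mul, hwsum x y h, one_mul]
  · simp only [if_neg h, add_zero]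

lemma gibbsExp_comp (β : ℝ) (T : Equiv.Perm (TorusPt d L))
    (hadj : ∀ x y, torusAdj (T x) (T y) ↔ torusAdj x y) (f : SpinCfg d L N → ℝ) :
    gibbsExp d L N β f = gibbsExp d L N β (fun φ => f (fun x => φ (T x))) := by
  unfold gibbsExp
  congr 1
  have key : (∫ φ, f (fun x => φ (T x)) * Real.exp (-β * hamiltonian φ)
      ∂(spinMeasure d L N))
      = ∫ φ, f φ * Real.exp (-β * hamiltonian φ) ∂(spinMeasure d L N) := by
    have h1 : (∫ φ, f (fun x => φ (T x)) * Real.exp (-β * hamiltonian φ)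
        ∂(spinMeasure d L N))
        = ∫ φ, (fun ψ : SpinCfg d L N => f ψ * Real.exp (-β * hamiltonian ψ))
            (fun x => φ (T x)) ∂(spinMeasure d L N) := by
      refine integral_congr_ae (Filter.Eventually.of_forall fun φ => ?_)
      simp only
      rw [hamiltonian_comp T hadj]
    rw [h1]
    exact integral_precomp (sphereUniform N) T
      (fun ψ : SpinCfg d L N => f ψ * Real.exp (-β * hamiltonian ψ))
  exact key.symm

lemma corrOne_comp (β : ℝ) (T : Equiv.Perm (TorusPt d L))
    (hadj : ∀ x y, torusAdj (T x) (T y) ↔ torusAdj x y) (x y : TorusPt d L) :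
    corrOne d L N β x y = corrOne d L N β (T x) (T y) := by
  unfold corrOne
  rw [gibbsExp_comp β T hadj]

lemma corrOne_symm (β : ℝ) (x y : TorusPt d L) :
    corrOne d L N β x y = corrOne d L N β y x := by
  unfold corrOne
  rw [show (fun φ : SpinCfg d L N =>
      (φ x : EuclideanSpace ℝ (Fin N)) 0 * (φ y : EuclideanSpace ℝ (Fin N)) 0)
      = (fun φ : SpinCfg d L N =>
      (φ y : EuclideanSpace ℝ (Fin N)) 0 * (φ x : EuclideanSpace ℝ (Fin N)) 0) from
    funext fun φ => mul_comm _ _]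

end Spin

/-- **Even-distance convexity bound for the spin O(N) two-point function.**
If `z ≠ o`, `z_i + q` is even and `z_i - q, z_i + q ∈ (0, L)`, then
`⟨φ_o^1 φ_z^1⟩ ≤ (1/2)⟨φ_o^1 φ_{(z_i-q)e_i}^1⟩ + (1/2)⟨φ_o^1 φ_{(z_i+q)e_i}^1⟩`. -/
theorem spin_two_point_even_axis_bound
    (d L N : ℕ) [NeZero L] [NeZero N] (hd : 2 ≤ d) (hL : Even L)
    (β : ℝ) (hβ : 0 ≤ β) (z : TorusPt d L) (hz : z ≠ torusOrigin d L) (i : Fin d)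
    (q : ℕ) (hpar : Even ((z i).val + q))
    (hlow : q < (z i).val) (hhigh : (z i).val + q < L) :
    corrOne d L N β (torusOrigin d L) z ≤
      (1 / 2) * corrOne d L N β (torusOrigin d L) (axisPt d L i ((z i).val - q)) +
        (1 / 2) * corrOne d L N β (torusOrigin d L) (axisPt d L i ((z i).val + q)) := by
  classical
  set v : ℕ := (z i).val with hvdef
  have hLpos : 0 < L := Nat.pos_of_ne_zero (NeZero.ne L)
  have hL2 : L / 2 * 2 = L := Nat.div_mul_cancel hL.two_dvd
  have hvL : v < L := ZMod.val_lt (z i)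
  obtain ⟨k, hk⟩ := hpar
  have hkq : v + q = 2 * k := by omega
  -- the reflection data
  set c : ZMod L := ((v + q : ℕ) : ZMod L) with hcdef
  set hmid : ZMod L := ((k : ℕ) : ZMod L) with hmiddef
  have hcastval : ∀ u : ZMod L, ((u.val : ℕ) : ZMod L) = u := fun u => ZMod.natCast_zmod_val u
  have hcvz : ((v : ℕ) : ZMod L) = z i := hcastval (z i)
  have hc2 : c = 2 * hmid := by rw [hcdef, hmiddef, hkq]; push_cast; ring
  set dv : TorusPt d L → ℕ := fun x => (x i - hmid).val with hdvdef
  set p : TorusPt d L → Prop := fun x => dv x = 0 ∨ dv x = L / 2 with hpdef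
  set a : TorusPt d L → Prop := fun x => dv x ≤ L / 2 with hadef
  set σ : TorusPt d L → TorusPt d L := torusRefl i c with hσdef
  have hσinv : ∀ x, σ (σ x) = x := torusRefl_invol i c
  set σE : Equiv.Perm (TorusPt d L) := Function.Involutive.toPerm σ hσinv with hσEdef
  have hadjσ : ∀ x y : TorusPt d L, torusAdj (σ x) (σ y) ↔ torusAdj x y :=
    torusAdj_refl_iff i c
  -- side geometry
  have hdvlt : ∀ x : TorusPt d L, dv x < L := fun x => ZMod.val_lt _
  have hdv0 : ∀ x : TorusPt d L, dv x = 0 ↔ x i - hmid = 0 := fun x => ZMod.val_eq_zero _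
  have hdvσ : ∀ x : TorusPt d L, (σ x) i - hmid = -(x i - hmid) := by
    intro x
    show torusRefl i c x i - hmid = -(x i - hmid)
    rw [torusRefl_apply_self, hc2]; ring
  have hdvσval : ∀ x : TorusPt d L, dv (σ x) = if x i - hmid = 0 then 0 else L - dv x := by
    intro x
    show ((σ x) i - hmid).val = _
    rw [hdvσ x, ZMod.neg_val]
  have hfix : ∀ x, p x → σ x = x := by
    intro x hx
    have h0 : (2 : ZMod L) * (x i - hmid) = 0 := by
      rcases hx with h | h
      · rw [(hdv0 x).mp h, mul_zero]
      · have hval : x i - hmid = ((L / 2 : ℕ) : ZMod L) := by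
          conv_lhs => rw [← hcastval (x i - hmid)]
          rw [show (x i - hmid).val = dv x from rfl, h]
        rw [hval]
        calc (2 : ZMod L) * ((L / 2 : ℕ) : ZMod L)
            = ((2 * (L / 2) : ℕ) : ZMod L) := by push_cast; ring
          _ = ((L : ℕ) : ZMod L) := by congr 1; omega
          _ = 0 := ZMod.natCast_self L
    have hcx : c - x i = x i := by rw [hc2]; linear_combination -h0
    show Function.update x i (c - x i) = x
    rw [hcx, Function.update_eq_self]
  have hpa : ∀ x, p x → a x := by
    intro x hx
    show dv x ≤ L / 2
    rcases hx with h | h <;> omega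
  have hplus : ∀ x, a x → ¬ p x → ¬ a (σ x) := by
    intro x hax hpx haσ
    have hpx' : ¬ (dv x = 0 ∨ dv x = L / 2) := hpx
    push_neg at hpx'
    have h1 : dv (σ x) = L - dv x := by
      rw [hdvσval x, if_neg (fun h0 => hpx'.1 ((hdv0 x).mpr h0))]
    have hax' : dv x ≤ L / 2 := hax
    have haσ' : dv (σ x) ≤ L / 2 := haσ
    rw [h1] at haσ'
    omega
  have hminus : ∀ x, ¬ a x → a (σ x) ∧ ¬ p (σ x) := by
    intro x hax
    have hax' : ¬ dv x ≤ L / 2 := hax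
    push_neg at hax'
    have hne : dv x ≠ 0 := by omega
    have h1 : dv (σ x) = L - dv x := by
      rw [hdvσval x, if_neg (fun h0 => hne ((hdv0 x).mpr h0))]
    have h2 := hdvlt x
    constructor
    · show dv (σ x) ≤ L / 2
      rw [h1]; omega
    · show ¬ (dv (σ x) = 0 ∨ dv (σ x) = L / 2)
      push_neg
      rw [h1]
      constructor <;> omega
  -- neighbours move `dv` by at most one (cyclically)
  have hstep : ∀ u : ZMod L, (u + 1).val = u.val + 1 ∨ ((u + 1).val = 0 ∧ u.val = L - 1) := by
    intro u
    rcases lt_or_ge (u.val + 1) L with h | h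
    · left
      have hcast1 : u + 1 = ((u.val + 1 : ℕ) : ZMod L) := by
        rw [Nat.cast_add, hcastval, Nat.cast_one]
      rw [hcast1, ZMod.val_cast_of_lt h]
    · right
      have hL' : u.val + 1 = L := by have := ZMod.val_lt u; omega
      have hz0 : u + 1 = 0 := by
        calc u + 1 = ((u.val + 1 : ℕ) : ZMod L) := by rw [Nat.cast_add, hcastval, Nat.cast_one]
          _ = ((L : ℕ) : ZMod L) := by rw [hL']
          _ = 0 := ZMod.natCast_self L
      rw [hz0, ZMod.val_zero]
      exact ⟨rfl, by omega⟩
  have hcase : ∀ x' : TorusPt d L, ∀ j : Fin d,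
      dv (Function.update x' j (x' j + 1)) = dv x' + 1
        ∨ (dv (Function.update x' j (x' j + 1)) = 0 ∧ dv x' = L - 1)
        ∨ dv x' = dv (Function.update x' j (x' j + 1)) := by
    intro x' j
    rcases eq_or_ne j i with hji | hji
    · subst hji
      have h2 : dv (Function.update x' j (x' j + 1)) = ((x' j - hmid) + 1).val := by
        show (Function.update x' j (x' j + 1) j - hmid).val = _
        rw [Function.update_self]
        congr 1
        ring
      rcases hstep (x' j - hmid) with h | h
      · left; rw [h2, h]
      · right; left
        exact ⟨by rw [h2, h.1], h.2⟩
    · right; right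
      show (x' i - hmid).val = (Function.update x' j (x' j + 1) i - hmid).val
      rw [Function.update_of_ne (Ne.symm hji)]
  have hadjdv : ∀ x y : TorusPt d L, torusAdj x y →
      dv x = dv y ∨ (dv y = dv x + 1 ∨ (dv y = 0 ∧ dv x = L - 1))
        ∨ (dv x = dv y + 1 ∨ (dv x = 0 ∧ dv y = L - 1)) := by
    intro x y hxy
    rcases hxy with ⟨j, hj | hj⟩
    · subst hj
      rcases hcase x j with h | h | h
      · right; left; left; exact h
      · right; left; right; exact h
      · left; exact h
    · have hx : x = Function.update y j (y j + 1) := by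
        subst hj
        funext kk
        rcases eq_or_ne kk j with rfl | hkk
        · rw [Function.update_self, Function.update_self]; ring
        · rw [Function.update_of_ne hkk, Function.update_of_ne hkk]
      rcases (hx ▸ hcase y j : dv x = dv y + 1 ∨ (dv x = 0 ∧ dv y = L - 1) ∨ dv y = dv x) with
        h | h | h
      · right; right; left; exact h
      · right; right; right; exact h
      · left; exact h.symm
  have hcross1 : ∀ x y : TorusPt d L, torusAdj x y → ¬ (a x ∧ ¬ p x ∧ ¬ a y) := by
    rintro x y hxy ⟨hax, hpx, hay⟩
    have hpx' : ¬ (dv x = 0 ∨ dv x = L / 2) := hpx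
    push_neg at hpx'
    have hax' : dv x ≤ L / 2 := hax
    have hay' : ¬ dv y ≤ L / 2 := hay
    push_neg at hay'
    have h1 := hdvlt x
    have h2 := hdvlt y
    rcases hadjdv x y hxy with h | (h | h) | (h | h) <;> omega
  have hcross2 : ∀ x y : TorusPt d L, torusAdj x y → ¬ (¬ a x ∧ a y ∧ ¬ p y) := by
    rintro x y hxy ⟨hax, hay, hpy⟩
    have hpy' : ¬ (dv y = 0 ∨ dv y = L / 2) := hpy
    push_neg at hpy'
    have hay' : dv y ≤ L / 2 := hay
    have hax' : ¬ dv x ≤ L / 2 := hax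
    push_neg at hax'
    have h1 := hdvlt x
    have h2 := hdvlt y
    rcases hadjdv x y hxy with h | (h | h) | (h | h) <;> omega
  -- weights sum to one across the reflection
  have wval1 : ∀ x y : TorusPt d L, a x → a y → ¬ (p x ∧ p y) → wplus p a x y = 1 := by
    intro x y hx hy hnp
    unfold wplus
    rw [if_neg (not_or.mpr ⟨not_not_intro hx, not_not_intro hy⟩), if_neg hnp]
  have wvalhalf : ∀ x y : TorusPt d L, a x → a y → p x → p y → wplus p a x y = 1/2 := by
    intro x y hx hy hpx hpy
    unfold wplus
    rw [if_neg (not_or.mpr ⟨not_not_intro hx, not_not_intro hy⟩), if_pos ⟨hpx, hpy⟩]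
  have wval0 : ∀ x y : TorusPt d L, ¬ a x ∨ ¬ a y → wplus p a x y = 0 := by
    intro x y h
    unfold wplus
    rw [if_pos h]
  have hwsum : ∀ x y : TorusPt d L, torusAdj x y →
      wplus p a x y + wplus p a (σ x) (σ y) = 1 := by
    intro x y hxy
    by_cases hax : a x
    · by_cases hpx : p x
      · by_cases hay : a y
        · by_cases hpy : p y
          · rw [hfix x hpx, hfix y hpy, wvalhalf x y hax hay hpx hpy]; norm_num
          · have h1 : ¬ a (σ y) := hplus y hay hpy
            rw [hfix x hpx, wval1 x y hax hay (fun hh => hpy hh.2),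
              wval0 x (σ y) (Or.inr h1)]; norm_num
        · have h1 := hminus y hay
          rw [hfix x hpx, wval0 x y (Or.inr hay),
            wval1 x (σ y) hax h1.1 (fun hh => h1.2 hh.2)]; norm_num
      · have h1 : ¬ a (σ x) := hplus x hax hpx
        by_cases hay : a y
        · by_cases hpy : p y
          · rw [hfix y hpy, wval1 x y hax hay (fun hh => hpx hh.1),
              wval0 (σ x) y (Or.inl h1)]; norm_num
          · have h2 : ¬ a (σ y) := hplus y hay hpy
            rw [wval1 x y hax hay (fun hh => hpx hh.1),
              wval0 (σ x) (σ y) (Or.inl h1)]; norm_num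
        · exact absurd ⟨hax, hpx, hay⟩ (hcross1 x y hxy)
    · have h1 := hminus x hax
      by_cases hay : a y
      · by_cases hpy : p y
        · rw [hfix y hpy, wval0 x y (Or.inl hax),
            wval1 (σ x) y h1.1 hay (fun hh => h1.2 hh.1)]; norm_num
        · exact absurd ⟨hax, hay, hpy⟩ (hcross2 x y hxy)
      · have h2 := hminus y hay
        rw [wval0 x y (Or.inl hax),
          wval1 (σ x) (σ y) h1.1 h2.1 (fun hh => h1.2 hh.1)]; norm_num
  -- the positions of the relevant points
  have hkL : k < L / 2 := by omega
  have hkpos : 0 < k := by omega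
  have hbi : (axisPt d L i (v + q)) i = c := by
    show (if i = i then ((v + q : ℕ) : ZMod L) else 0) = c
    rw [if_pos rfl, hcdef]
  have hσb : σ (axisPt d L i (v + q)) = torusOrigin d L := by
    funext kk
    rcases eq_or_ne kk i with rfl | hkk
    · show torusRefl kk c (axisPt d L kk (v + q)) kk = torusOrigin d L kk
      rw [torusRefl_apply_self, hbi]
      show c - c = 0
      ring
    · show torusRefl i c (axisPt d L i (v + q)) kk = torusOrigin d L kk
      rw [torusRefl_apply_ne _ _ _ hkk]
      show (if kk = i then _ else 0) = (0 : ZMod L)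
      rw [if_neg hkk]
  have hσzi : σ z i = ((q : ℕ) : ZMod L) := by
    show torusRefl i c z i = _
    rw [torusRefl_apply_self, hcdef, ← hcvz]
    push_cast
    ring
  have hdvz : dv z = v - k := by
    show ((z i - hmid).val) = v - k
    have hzi : z i - hmid = (((v - k : ℕ)) : ZMod L) := by
      rw [← hcvz, hmiddef, Nat.cast_sub (by omega : k ≤ v)]
    rw [hzi, ZMod.val_cast_of_lt (by omega : v - k < L)]
  have haz : a z := by
    show dv z ≤ L / 2
    rw [hdvz]; omega
  have hdvb : dv (axisPt d L i (v + q)) = k := by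
    show ((axisPt d L i (v + q)) i - hmid).val = k
    rw [hbi]
    have hcm : c - hmid = hmid := by rw [hc2]; ring
    rw [hcm, hmiddef, ZMod.val_cast_of_lt (by omega : k < L)]
  have hab : a (axisPt d L i (v + q)) := by
    show dv (axisPt d L i (v + q)) ≤ L / 2
    rw [hdvb]; omega
  -- the two observables
  set K : ℝ := (Fintype.card (TorusPt d L) : ℝ) with hK
  set CB : ℝ := Real.exp (|β| * K ^ 2) with hCB
  set u : SpinCfg d L N → ℝ := fun φ =>
    (φ z : EuclideanSpace ℝ (Fin N)) 0 * Real.exp (-β * hamPlus p a φ) with hudef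
  set w : SpinCfg d L N → ℝ := fun φ =>
    (φ (axisPt d L i (v + q)) : EuclideanSpace ℝ (Fin N)) 0 *
      Real.exp (-β * hamPlus p a φ) with hwdef
  have hum : Measurable u :=
    (measurable_spinCoord z).mul
      (Real.continuous_exp.measurable.comp ((measurable_hamPlus p a).const_mul (-β)))
  have hwm : Measurable w :=
    (measurable_spinCoord (axisPt d L i (v + q))).mul
      (Real.continuous_exp.measurable.comp ((measurable_hamPlus p a).const_mul (-β)))
  have hexpb : ∀ φ : SpinCfg d L N, |Real.exp (-β * hamPlus p a φ)| ≤ CB := by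
    intro φ
    rw [abs_of_pos (Real.exp_pos _), hCB]
    apply Real.exp_le_exp.mpr
    calc -β * hamPlus p a φ ≤ |(-β) * hamPlus p a φ| := le_abs_self _
      _ = |β| * |hamPlus p a φ| := by rw [abs_mul, abs_neg]
      _ ≤ |β| * K ^ 2 := mul_le_mul_of_nonneg_left (hamPlus_abs_le p a φ) (abs_nonneg β)
  have hub : ∀ φ, |u φ| ≤ CB := by
    intro φ
    rw [hudef]
    simp only
    rw [abs_mul]
    calc |(φ z : EuclideanSpace ℝ (Fin N)) 0| * |Real.exp (-β * hamPlus p a φ)|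
        ≤ 1 * CB := mul_le_mul (spin_coord_abs_le_one φ z) (hexpb φ) (abs_nonneg _)
          zero_le_one
      _ = CB := one_mul _
  have hwb : ∀ φ, |w φ| ≤ CB := by
    intro φ
    rw [hwdef]
    simp only
    rw [abs_mul]
    calc |(φ (axisPt d L i (v + q)) : EuclideanSpace ℝ (Fin N)) 0| *
          |Real.exp (-β * hamPlus p a φ)|
        ≤ 1 * CB := mul_le_mul (spin_coord_abs_le_one φ _) (hexpb φ) (abs_nonneg _)
          zero_le_one
      _ = CB := one_mul _
  have hud : ∀ φ ψ : SpinCfg d L N, (∀ x, a x → φ x = ψ x) → u φ = u ψ := by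
    intro φ ψ h
    rw [hudef]
    simp only
    rw [h z haz, hamPlus_dep p a φ ψ h]
  have hwd : ∀ φ ψ : SpinCfg d L N, (∀ x, a x → φ x = ψ x) → w φ = w ψ := by
    intro φ ψ h
    rw [hwdef]
    simp only
    rw [h _ hab, hamPlus_dep p a φ ψ h]
  -- reflection positivity
  have hRP := rp_ineq (m := sphereUniform N) p a σ hσinv hfix hpa hplus hminus
    u w hum hwm CB CB hub hwb hud hwd
  -- identify the integrands
  have hsplit : ∀ φ : SpinCfg d L N,
      hamiltonian φ = hamPlus p a φ + hamPlus p a (fun x => φ (σ x)) :=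
    ham_split p a σE hσinv hadjσ hwsum
  have hexpsplit : ∀ φ : SpinCfg d L N,
      Real.exp (-β * hamPlus p a φ) * Real.exp (-β * hamPlus p a (fun x => φ (σ x)))
        = Real.exp (-β * hamiltonian φ) := by
    intro φ
    rw [← Real.exp_add]
    congr 1
    rw [hsplit φ]
    ring
  have hint1 : ∀ φ : SpinCfg d L N, u φ * w (φ ∘ σ)
      = ((φ z : EuclideanSpace ℝ (Fin N)) 0 *
          (φ (torusOrigin d L) : EuclideanSpace ℝ (Fin N)) 0) *
        Real.exp (-β * hamiltonian φ) := by
    intro φ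
    show ((φ z : EuclideanSpace ℝ (Fin N)) 0 * Real.exp (-β * hamPlus p a φ)) *
        ((φ (σ (axisPt d L i (v + q))) : EuclideanSpace ℝ (Fin N)) 0 *
          Real.exp (-β * hamPlus p a (fun x => φ (σ x)))) = _
    rw [hσb, ← hexpsplit φ]
    ring
  have hint2 : ∀ φ : SpinCfg d L N, u φ * u (φ ∘ σ)
      = ((φ z : EuclideanSpace ℝ (Fin N)) 0 *
          (φ (σ z) : EuclideanSpace ℝ (Fin N)) 0) *
        Real.exp (-β * hamiltonian φ) := by
    intro φ
    show ((φ z : EuclideanSpace ℝ (Fin N)) 0 * Real.exp (-β * hamPlus p a φ)) *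
        ((φ (σ z) : EuclideanSpace ℝ (Fin N)) 0 *
          Real.exp (-β * hamPlus p a (fun x => φ (σ x)))) = _
    rw [← hexpsplit φ]
    ring
  have hint3 : ∀ φ : SpinCfg d L N, w φ * w (φ ∘ σ)
      = ((φ (axisPt d L i (v + q)) : EuclideanSpace ℝ (Fin N)) 0 *
          (φ (torusOrigin d L) : EuclideanSpace ℝ (Fin N)) 0) *
        Real.exp (-β * hamiltonian φ) := by
    intro φ
    show ((φ (axisPt d L i (v + q)) : EuclideanSpace ℝ (Fin N)) 0 *
        Real.exp (-β * hamPlus p a φ)) *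
        ((φ (σ (axisPt d L i (v + q))) : EuclideanSpace ℝ (Fin N)) 0 *
          Real.exp (-β * hamPlus p a (fun x => φ (σ x)))) = _
    rw [hσb, ← hexpsplit φ]
    ring
  -- normalisation
  set Z : ℝ := ∫ φ, Real.exp (-β * hamiltonian φ) ∂(spinMeasure d L N) with hZ
  have hZinv : 0 ≤ Z⁻¹ :=
    inv_nonneg.mpr (integral_nonneg fun φ => (Real.exp_pos _).le)
  have hcorr : ∀ x y : TorusPt d L, corrOne d L N β x y
      = Z⁻¹ * ∫ φ, ((φ x : EuclideanSpace ℝ (Fin N)) 0 *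
          (φ y : EuclideanSpace ℝ (Fin N)) 0) *
          Real.exp (-β * hamiltonian φ) ∂(spinMeasure d L N) := fun x y => rfl
  -- the three Gibbs integrals
  have hI1 : (∫ φ, ((φ (torusOrigin d L) : EuclideanSpace ℝ (Fin N)) 0 *
      (φ z : EuclideanSpace ℝ (Fin N)) 0) * Real.exp (-β * hamiltonian φ)
      ∂(spinMeasure d L N))
      = ∫ φ, u φ * w (φ ∘ σ) ∂(spinMeasure d L N) := by
    refine integral_congr_ae (Filter.Eventually.of_forall fun φ => ?_)
    show _ = u φ * w (φ ∘ σ)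
    rw [hint1 φ]
    ring
  have hI2 : (∫ φ, u φ * u (φ ∘ σ) ∂(spinMeasure d L N))
      = ∫ φ, ((φ z : EuclideanSpace ℝ (Fin N)) 0 *
          (φ (σ z) : EuclideanSpace ℝ (Fin N)) 0) *
          Real.exp (-β * hamiltonian φ) ∂(spinMeasure d L N) :=
    integral_congr_ae (Filter.Eventually.of_forall fun φ => hint2 φ)
  have hI3 : (∫ φ, w φ * w (φ ∘ σ) ∂(spinMeasure d L N))
      = ∫ φ, ((φ (axisPt d L i (v + q)) : EuclideanSpace ℝ (Fin N)) 0 *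
          (φ (torusOrigin d L) : EuclideanSpace ℝ (Fin N)) 0) *
          Real.exp (-β * hamiltonian φ) ∂(spinMeasure d L N) :=
    integral_congr_ae (Filter.Eventually.of_forall fun φ => hint3 φ)
  -- point translations
  have htrans : corrOne d L N β z (σ z)
      = corrOne d L N β (axisPt d L i (v - q)) (torusOrigin d L) := by
    have hTadj : ∀ x y : TorusPt d L,
        torusAdj ((Equiv.addRight (-(σ z))) x) ((Equiv.addRight (-(σ z))) y)
          ↔ torusAdj x y := by
      intro x y
      simp only [Equiv.coe_addRight]
      exact torusAdj_translate_iff _ x y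
    rw [corrOne_comp β (Equiv.addRight (-(σ z))) hTadj z (σ z)]
    simp only [Equiv.coe_addRight]
    have hp1 : z + -(σ z) = axisPt d L i (v - q) := by
      funext kk
      rcases eq_or_ne kk i with rfl | hkk
      · show z kk + -(σ z kk) = (if kk = kk then ((v - q : ℕ) : ZMod L) else 0)
        rw [if_pos rfl, hσzi, ← hcvz, Nat.cast_sub hlow.le]
        ring
      · show z kk + -(σ z kk) = (if kk = i then ((v - q : ℕ) : ZMod L) else 0)
        rw [if_neg hkk]
        have : σ z kk = z kk := by
          show torusRefl i c z kk = z kk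
          exact torusRefl_apply_ne _ _ _ hkk
        rw [this]
        ring
    have hp2 : σ z + -(σ z) = torusOrigin d L := by
      funext kk
      show σ z kk + -(σ z kk) = (0 : ZMod L)
      ring
    rw [hp1, hp2]
  -- putting everything together
  calc corrOne d L N β (torusOrigin d L) z
      = Z⁻¹ * ∫ φ, u φ * w (φ ∘ σ) ∂(spinMeasure d L N) := by
        rw [hcorr, hI1]
    _ ≤ Z⁻¹ * ((1 / 2) * ∫ φ, u φ * u (φ ∘ σ) ∂(spinMeasure d L N)
          + (1 / 2) * ∫ φ, w φ * w (φ ∘ σ) ∂(spinMeasure d L N)) :=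
        mul_le_mul_of_nonneg_left hRP hZinv
    _ = (1 / 2) * (Z⁻¹ * ∫ φ, u φ * u (φ ∘ σ) ∂(spinMeasure d L N))
          + (1 / 2) * (Z⁻¹ * ∫ φ, w φ * w (φ ∘ σ) ∂(spinMeasure d L N)) := by ring
    _ = (1 / 2) * corrOne d L N β z (σ z)
          + (1 / 2) * corrOne d L N β (axisPt d L i (v + q)) (torusOrigin d L) := by
        rw [hI2, hI3, hcorr z (σ z), hcorr (axisPt d L i (v + q)) (torusOrigin d L)]
    _ = (1 / 2) * corrOne d L N β (torusOrigin d L) (axisPt d L i (v - q))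
          + (1 / 2) * corrOne d L N β (torusOrigin d L) (axisPt d L i (v + q)) := by
        rw [htrans, corrOne_symm β (axisPt d L i (v - q)) (torusOrigin d L),
          corrOne_symm β (axisPt d L i (v + q)) (torusOrigin d L)]
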